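/- Let P_τ = C ⊔ O be a k-decomposition of a maximal ranked poset, F the face of the chain-order polytope O_{C,O}(τ) defined by two tight chain equalities x_{p_1}+⋯+x_{p_k} = x_a and x_{p'_1}+⋯+x_{p'_k} = x_{a'}, where p_i, p'_i ∈ Y^i and a, a' ∈ Y^{k+1}. Then every point of F satisfies x_{p_i} = x_{p'_i} for all 1 ≤ i ≤ k, and if a ≠ a' also x_a = x_{a'}. -/

import Mathlib

/-- The underlying set of the maximal ranked poset `P_τ`: the disjoint union
of rank sets `Y^i` with `|Y^i| = τ i`. -/
abbrev MaxRanked (ℓ : ℕ) (τ : Fin ℓ → ℕ) := Σ i : Fin ℓ, Fin (τ i)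

/-- The order of the maximal ranked poset: `x < y` iff `rank x < rank y`. -/
instance MaxRanked.instPartialOrder (ℓ : ℕ) (τ : Fin ℓ → ℕ) :
    PartialOrder (MaxRanked ℓ τ) where
  le x y := x = y ∨ x.1 < y.1
  lt x y := x.1 < y.1
  le_refl x := Or.inl rfl
  le_trans x y z hxy hyz := by
    rcases hxy with rfl | h
    · exact hyz
    · rcases hyz with rfl | h'
      · exact Or.inr h
      · exact Or.inr (h.trans h')
  lt_iff_le_not_ge x y := by
    constructor
    · intro h
      refine ⟨Or.inr h, ?_⟩
      rintro (rfl | h')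
      · exact absurd h (lt_irrefl y.1)
      · exact absurd (h.trans h') (lt_irrefl x.1)
    · rintro ⟨rfl | h, hn⟩
      · exact absurd (Or.inl rfl) hn
      · exact h
  le_antisymm x y hxy hyx := by
    rcases hxy with rfl | h
    · rfl
    · rcases hyx with rfl | h'
      · rfl
      · exact absurd (h.trans h') (lt_irrefl x.1)

/-- The chain-order polytope `O_{C,O}(τ)` of the `k`-decomposition of the
maximal ranked poset `P_τ` (ranks are indexed by `Fin ℓ`, so the paper's rank
`i` corresponds to index `i - 1`; the chain part `C` consists of the ranks
with index `< k`, together with `0̂`, and the order part `O` of the remaining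
ranks together with `1̂`; the coordinates of `0̂` and `1̂` are fixed to `0`
and `1`). -/
def chainOrderPolytope (ℓ : ℕ) (τ : Fin ℓ → ℕ) (k : ℕ) :
    Set (MaxRanked ℓ τ → ℝ) :=
  {x | (∀ p : MaxRanked ℓ τ, (p.1 : ℕ) < k → 0 ≤ x p) ∧
    (∀ p q : MaxRanked ℓ τ, k ≤ (p.1 : ℕ) → (q.1 : ℕ) = (p.1 : ℕ) + 1 →
      x p ≤ x q) ∧
    (∀ p : MaxRanked ℓ τ, k ≤ (p.1 : ℕ) → (p.1 : ℕ) = ℓ - 1 → x p ≤ 1) ∧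
    (∀ (c : ∀ i : Fin ℓ, Fin (τ i)) (q : MaxRanked ℓ τ), (q.1 : ℕ) = k →
      ∑ i ∈ Finset.univ.filter (fun i : Fin ℓ => (i : ℕ) < k),
        x ⟨i, c i⟩ ≤ x q) ∧
    (k = ℓ → ∀ c : ∀ i : Fin ℓ, Fin (τ i), ∑ i : Fin ℓ, x ⟨i, c i⟩ ≤ 1)}

/-- On the face of the chain-order polytope of a `k`-decomposition of `P_τ`
where the two chain inequalities given by `(p_1, …, p_k, a)` and
`(p'_1, …, p'_k, a')` are tight, every point satisfies `x_{p_i} = x_{p'_i}`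
for all `i ≤ k`, and `x_a = x_{a'}` if `a ≠ a'`. -/
theorem two_tight_chains (ℓ : ℕ) (τ : Fin ℓ → ℕ) (hτ : ∀ i, 0 < τ i)
    (k : ℕ) (hk : k < ℓ)
    (c c' : ∀ i : Fin ℓ, Fin (τ i)) (qa qa' : MaxRanked ℓ τ)
    (hqa : (qa.1 : ℕ) = k) (hqa' : (qa'.1 : ℕ) = k)
    (x : MaxRanked ℓ τ → ℝ) (hx : x ∈ chainOrderPolytope ℓ τ k)
    (heq : ∑ i ∈ Finset.univ.filter (fun i : Fin ℓ => (i : ℕ) < k),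
        x ⟨i, c i⟩ = x qa)
    (heq' : ∑ i ∈ Finset.univ.filter (fun i : Fin ℓ => (i : ℕ) < k),
        x ⟨i, c' i⟩ = x qa') :
    (∀ i : Fin ℓ, (i : ℕ) < k → x ⟨i, c i⟩ = x ⟨i, c' i⟩) ∧
    (qa ≠ qa' → x qa = x qa') := by

  classical
  have h4 := hx.2.2.2.1
  set s := Finset.univ.filter (fun i : Fin ℓ => (i : ℕ) < k) with hs
  -- key: swapping one coordinate
  have key : ∀ (d d' : ∀ i : Fin ℓ, Fin (τ i)) (q : MaxRanked ℓ τ),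
      (q.1 : ℕ) = k → (∑ i ∈ s, x ⟨i, d i⟩ = x q) →
      ∀ i : Fin ℓ, (i : ℕ) < k → x ⟨i, d' i⟩ ≤ x ⟨i, d i⟩ := by
    intro d d' q hq hsum i hi
    have hmem : i ∈ s := by simp [hs, hi]
    have h := h4 (Function.update d i (d' i)) q hq
    have h1 : ∑ j ∈ s, x ⟨j, Function.update d i (d' i) j⟩
        = x ⟨i, d' i⟩ + ∑ j ∈ s.erase i, x ⟨j, d j⟩ := by
      rw [← Finset.add_sum_erase _ _ hmem]
      congr 1
      · simp
      · exact Finset.sum_congr rfl fun j hj => by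
          rw [Function.update_of_ne (Finset.ne_of_mem_erase hj)]
    have h2 : ∑ j ∈ s, x ⟨j, d j⟩
        = x ⟨i, d i⟩ + ∑ j ∈ s.erase i, x ⟨j, d j⟩ :=
      (Finset.add_sum_erase _ _ hmem).symm
    rw [h1] at h
    rw [h2] at hsum
    linarith
  have hle : ∀ i : Fin ℓ, (i : ℕ) < k → x ⟨i, c' i⟩ ≤ x ⟨i, c i⟩ :=
    key c c' qa hqa heq
  have hge : ∀ i : Fin ℓ, (i : ℕ) < k → x ⟨i, c i⟩ ≤ x ⟨i, c' i⟩ :=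
    key c' c qa' hqa' heq'
  have hmain : ∀ i : Fin ℓ, (i : ℕ) < k → x ⟨i, c i⟩ = x ⟨i, c' i⟩ :=
    fun i hi => le_antisymm (hge i hi) (hle i hi)
  refine ⟨hmain, fun _ => ?_⟩
  rw [← heq, ← heq']
  refine Finset.sum_congr rfl fun i hi => ?_
  exact hmain i (by simpa [hs] using hi)
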